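/- Let V ∈ ℝ_{≥0}^{n×m} with m mod n = 0 and no ties within any row of V. Then SoftRR_τ(V) converges entrywise as τ → 0⁺ to the allocation matrix output by round robin RR(V). -/
import Mathlib


open Finset

/-- Tie-breaking argmax: the smallest index in `C` attaining the maximum of `v` on `C`. -/
noncomputable def pickTB (v : ℕ → ℝ) (C : Finset ℕ) : ℕ :=
  if h : (C.filter fun j => ∀ j' ∈ C, v j' ≤ v j).Nonempty
  then (C.filter fun j => ∀ j' ∈ C, v j' ≤ v j).min' h
  else 0

/-- softmax over goods `0, ..., m-1`. -/
noncomputable def softmaxOn (m : ℕ) (z : ℕ → ℝ) (j : ℕ) : ℝ :=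
  Real.exp (z j) / ∑ j' ∈ Finset.range m, Real.exp (z j')

/-- minimum entry of a row over goods `0, ..., m-1`. -/
noncomputable def rowMin (m : ℕ) (vi : ℕ → ℝ) : ℝ :=
  if h : (Finset.range m).Nonempty then (Finset.range m).inf' h vi else 0

/-- State of the soft one-round algorithm `sr_τ` after `i` iterations:
`(y^{(i)}, c^{(i)})`, where `c^{(0)} = 1`, and at iteration `i+1` (agent `i`, 0-indexed)
`y = softmax(((V[i] − min(V[i])·1 + 1) ⊙ c)/τ)` and `c ← (1 − y) ⊙ c`. -/
noncomputable def srState (τ : ℝ) (v : ℕ → ℕ → ℝ) (m : ℕ) : ℕ → (ℕ → ℝ) × (ℕ → ℝ)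
  | 0 => (fun _ => 0, fun _ => 1)
  | i + 1 =>
    let c := (srState τ v m i).2
    let y := softmaxOn m fun j => (v i j - rowMin m (v i) + 1) * c j / τ
    (y, fun j => (1 - y j) * c j)

/-- Row `i` (0-indexed) of the output matrix `R` of the soft one-round algorithm. -/
noncomputable def srOut (τ : ℝ) (v : ℕ → ℕ → ℝ) (m : ℕ) (i : ℕ) : ℕ → ℝ :=
  (srState τ v m (i + 1)).1

/-- Remaining goods `C_i` in the exact one-round procedure (0-indexed: `C 0 = [m]`). -/
noncomputable def oneRoundC (v : ℕ → ℕ → ℝ) (m : ℕ) : ℕ → Finset ℕ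
  | 0 => Finset.range m
  | i + 1 => (oneRoundC v m i).erase (pickTB (v i) (oneRoundC v m i))

/-- Output matrix of the exact one-round procedure: `r(V)_{ij} = 1` iff agent `i`
picks good `j` (the maximizer of `v i` over `C_i`). -/
noncomputable def oneRoundMat (v : ℕ → ℕ → ℝ) (m : ℕ) (i j : ℕ) : ℝ :=
  if j = pickTB (v i) (oneRoundC v m i) then 1 else 0

/-- Remaining goods before turn `t` of round robin; at turn `t` agent `t % n` picks. -/
noncomputable def rrRem (v : ℕ → ℕ → ℝ) (n m : ℕ) : ℕ → Finset ℕ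
  | 0 => Finset.range m
  | t + 1 => (rrRem v n m t).erase (pickTB (v (t % n)) (rrRem v n m t))

/-- The good picked at turn `t` of round robin. -/
noncomputable def rrPickAt (v : ℕ → ℕ → ℝ) (n m t : ℕ) : ℕ :=
  pickTB (v (t % n)) (rrRem v n m t)

/-- The bundle allocated to agent `i` by round robin. -/
noncomputable def rrBundle (v : ℕ → ℕ → ℝ) (n m i : ℕ) : Finset ℕ :=
  ((Finset.range m).filter fun t => t % n = i).image (rrPickAt v n m)

open Filter Topology

lemma pickTB_spec (w : ℕ → ℝ) (C : Finset ℕ) (h : C.Nonempty) :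
    pickTB w C ∈ C ∧ ∀ j' ∈ C, w j' ≤ w (pickTB w C) := by
  obtain ⟨a, ha, hmax⟩ := C.exists_max_image w h
  have hne : (C.filter fun j => ∀ j' ∈ C, w j' ≤ w j).Nonempty :=
    ⟨a, Finset.mem_filter.2 ⟨ha, hmax⟩⟩
  rw [pickTB, dif_pos hne]
  exact Finset.mem_filter.1 (Finset.min'_mem _ hne)

lemma oneRoundC_subset (v : ℕ → ℕ → ℝ) (m : ℕ) : ∀ t, oneRoundC v m t ⊆ Finset.range m
  | 0 => Finset.Subset.refl _
  | t + 1 => (Finset.erase_subset _ _).trans (oneRoundC_subset v m t)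

lemma oneRoundC_card (v : ℕ → ℕ → ℝ) (m : ℕ) :
    ∀ t, t ≤ m → (oneRoundC v m t).card = m - t := by
  intro t
  induction t with
  | zero => simp [oneRoundC]
  | succ t ih =>
    intro ht
    have h1 : (oneRoundC v m t).card = m - t := ih (Nat.le_of_succ_le ht)
    have hne : (oneRoundC v m t).Nonempty := by
      rw [← Finset.card_pos, h1]; omega
    rw [oneRoundC, Finset.card_erase_of_mem (pickTB_spec _ _ hne).1, h1]
    omega

lemma oneRoundC_nonempty (v : ℕ → ℕ → ℝ) {m t : ℕ} (ht : t < m) :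
    (oneRoundC v m t).Nonempty := by
  rw [← Finset.card_pos, oneRoundC_card v m t ht.le]; omega

lemma oneRoundC_mono (v : ℕ → ℕ → ℝ) (m : ℕ) {t1 t2 : ℕ} (h : t1 ≤ t2) :
    oneRoundC v m t2 ⊆ oneRoundC v m t1 := by
  induction t2 with
  | zero => simp_all
  | succ t ih =>
    rcases Nat.lt_or_ge t1 (t + 1) with h' | h'
    · exact (Finset.erase_subset _ _).trans (ih (Nat.lt_succ_iff.1 h'))
    · have : t1 = t + 1 := le_antisymm h h'
      subst this; exact Finset.Subset.refl _

lemma softmaxOn_eq_inv (m : ℕ) (z : ℕ → ℝ) (j : ℕ) :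
    softmaxOn m z j = (∑ j' ∈ Finset.range m, Real.exp (z j' - z j))⁻¹ := by
  have h : ∑ j' ∈ Finset.range m, Real.exp (z j')
      = Real.exp (z j) * ∑ j' ∈ Finset.range m, Real.exp (z j' - z j) := by
    rw [Finset.mul_sum]
    refine Finset.sum_congr rfl fun j' _ => ?_
    rw [← Real.exp_add]
    congr 1; ring
  rw [softmaxOn, h, div_mul_eq_div_div, div_self (Real.exp_ne_zero _), one_div]

lemma softmax_lim_one {l : Filter ℝ} (m jstar : ℕ) (hjm : jstar < m) (s : ℕ → ℝ → ℝ)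
    (hgap : ∀ j2, j2 < m → j2 ≠ jstar → Tendsto (fun τ => s j2 τ - s jstar τ) l atBot) :
    Tendsto (fun τ => softmaxOn m (fun j' => s j' τ) jstar) l (𝓝 1) := by
  have hsum : Tendsto (fun τ => ∑ j' ∈ Finset.range m, Real.exp (s j' τ - s jstar τ)) l
      (𝓝 (∑ j' ∈ Finset.range m, if j' = jstar then (1:ℝ) else 0)) := by
    refine tendsto_finset_sum _ fun j2 hj2 => ?_
    rw [Finset.mem_range] at hj2
    by_cases h : j2 = jstar
    · subst h; simpa using tendsto_const_nhds
    · rw [if_neg h]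
      exact Real.tendsto_exp_atBot.comp (hgap j2 hj2 h)
  rw [Finset.sum_ite_eq' (Finset.range m) jstar (fun _ => (1:ℝ)),
    if_pos (Finset.mem_range.2 hjm)] at hsum
  have h2 := hsum.inv₀ one_ne_zero
  rw [inv_one] at h2
  refine h2.congr fun τ => ?_
  exact (softmaxOn_eq_inv m _ jstar).symm

lemma softmax_lim_zero {l : Filter ℝ} (m jstar j2 : ℕ) (hjm : jstar < m) (s : ℕ → ℝ → ℝ)
    (hgap : Tendsto (fun τ => s j2 τ - s jstar τ) l atBot) :
    Tendsto (fun τ => softmaxOn m (fun j' => s j' τ) j2) l (𝓝 0) := by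
  have h0 : ∀ τ, 0 ≤ softmaxOn m (fun j' => s j' τ) j2 := fun τ =>
    div_nonneg (Real.exp_nonneg _) (Finset.sum_nonneg fun _ _ => Real.exp_nonneg _)
  have hle : ∀ τ, softmaxOn m (fun j' => s j' τ) j2 ≤ Real.exp (s j2 τ - s jstar τ) := by
    intro τ
    rw [softmaxOn, Real.exp_sub]
    refine div_le_div_of_nonneg_left (Real.exp_nonneg _) (Real.exp_pos _) ?_
    exact Finset.single_le_sum (f := fun j' => Real.exp (s j' τ))
      (fun i _ => Real.exp_nonneg _) (Finset.mem_range.2 hjm)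
  exact tendsto_of_tendsto_of_tendsto_of_le_of_le tendsto_const_nhds
    (Real.tendsto_exp_atBot.comp hgap) h0 hle


/-- for `V ∈ ℝ_{≥0}^{n×m}` with `m mod n = 0` and no ties within any row,
`SoftRR_τ(V)` (the sum over the `k = m/n` blocks of the soft one-round algorithm applied
to the `k`-fold vertical stacking of `V`) converges entrywise, as `τ → 0⁺`, to the
round-robin allocation matrix `RR(V)`. -/
theorem softRR_tendsto_RR (n m : ℕ) (v : ℕ → ℕ → ℝ)
    (hn : 0 < n) (hdiv : m % n = 0) (hnn : ∀ i j, 0 ≤ v i j)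
    (hties : ∀ i, i < n → ∀ j, j < m → ∀ j', j' < m → j ≠ j' → v i j ≠ v i j')
    (i : ℕ) (hi : i < n) (j : ℕ) (hj : j < m) :
    Tendsto
      (fun τ : ℝ => ∑ r ∈ Finset.range (m / n), srOut τ (fun i' => v (i' % n)) m (r * n + i) j)
      (nhdsWithin 0 (Set.Ioi 0))
      (nhds (if j ∈ rrBundle v n m i then (1 : ℝ) else 0)) := by
  classical
  set v' : ℕ → ℕ → ℝ := fun i' => v (i' % n) with hv'def
  have hv't : ∀ t, v' t = v (t % n) := fun t => by rw [hv'def]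
  have hm0 : 0 < m := Nat.lt_of_le_of_lt (Nat.zero_le j) hj
  have hties' : ∀ t j1, j1 < m → ∀ j2, j2 < m → j1 ≠ j2 → v' t j1 ≠ v' t j2 := by
    intro t
    rw [hv't t]
    exact hties (t % n) (Nat.mod_lt t hn)
  have hrowMin_le : ∀ t j1, j1 < m → rowMin m (v' t) ≤ v' t j1 := by
    intro t j1 hj1
    rw [rowMin, dif_pos ⟨0, Finset.mem_range.2 hm0⟩]
    exact Finset.inf'_le _ (Finset.mem_range.2 hj1)
  -- the step: c-limits at time t give y-limits at time t+1
  have step : ∀ t, t < m →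
      (∀ j1, j1 < m → Tendsto (fun τ => (srState τ v' m t).2 j1) (𝓝[>] (0:ℝ))
        (𝓝 (if j1 ∈ oneRoundC v' m t then 1 else 0))) →
      ∀ j1, j1 < m → Tendsto (fun τ => (srState τ v' m (t+1)).1 j1) (𝓝[>] (0:ℝ))
        (𝓝 (if j1 = pickTB (v' t) (oneRoundC v' m t) then 1 else 0)) := by
    intro t htm hc
    obtain ⟨hps, hpmax⟩ := pickTB_spec (v' t) (oneRoundC v' m t) (oneRoundC_nonempty v' htm)
    have hpm : pickTB (v' t) (oneRoundC v' m t) < m :=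
      Finset.mem_range.1 (oneRoundC_subset v' m t hps)
    have hsr : ∀ τ j1, (srState τ v' m (t+1)).1 j1
        = softmaxOn m
            (fun j2 => (v' t j2 - rowMin m (v' t) + 1) * (srState τ v' m t).2 j2 / τ) j1 :=
      fun τ j1 => rfl
    have hgap : ∀ j2, j2 < m → j2 ≠ pickTB (v' t) (oneRoundC v' m t) →
        Tendsto (fun τ =>
          (v' t j2 - rowMin m (v' t) + 1) * (srState τ v' m t).2 j2 / τ
          - (v' t (pickTB (v' t) (oneRoundC v' m t)) - rowMin m (v' t) + 1)
              * (srState τ v' m t).2 (pickTB (v' t) (oneRoundC v' m t)) / τ)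
          (𝓝[>] (0:ℝ)) atBot := by
      intro j2 hj2 hne
      have hcp : Tendsto (fun τ => (srState τ v' m t).2 (pickTB (v' t) (oneRoundC v' m t)))
          (𝓝[>] (0:ℝ)) (𝓝 1) := by
        have := hc _ hpm
        rwa [if_pos hps] at this
      have hcj : Tendsto (fun τ => (srState τ v' m t).2 j2) (𝓝[>] (0:ℝ))
          (𝓝 (if j2 ∈ oneRoundC v' m t then 1 else 0)) := hc j2 hj2
      have hnum : Tendsto (fun τ =>
          (v' t j2 - rowMin m (v' t) + 1) * (srState τ v' m t).2 j2
          - (v' t (pickTB (v' t) (oneRoundC v' m t)) - rowMin m (v' t) + 1)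
              * (srState τ v' m t).2 (pickTB (v' t) (oneRoundC v' m t)))
          (𝓝[>] (0:ℝ))
          (𝓝 ((v' t j2 - rowMin m (v' t) + 1) * (if j2 ∈ oneRoundC v' m t then 1 else 0)
            - (v' t (pickTB (v' t) (oneRoundC v' m t)) - rowMin m (v' t) + 1) * 1)) :=
        (tendsto_const_nhds.mul hcj).sub (tendsto_const_nhds.mul hcp)
      have hLlt : (v' t j2 - rowMin m (v' t) + 1) * (if j2 ∈ oneRoundC v' m t then (1:ℝ) else 0)
          - (v' t (pickTB (v' t) (oneRoundC v' m t)) - rowMin m (v' t) + 1) * 1 < 0 := by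
        by_cases hj2C : j2 ∈ oneRoundC v' m t
        · rw [if_pos hj2C]
          have h1 : v' t j2 < v' t (pickTB (v' t) (oneRoundC v' m t)) :=
            lt_of_le_of_ne (hpmax j2 hj2C) (hties' t j2 hj2 _ hpm hne)
          nlinarith
        · rw [if_neg hj2C]
          have h2 := hrowMin_le t _ hpm
          nlinarith
      have hmain := Tendsto.neg_mul_atTop hLlt hnum tendsto_inv_nhdsGT_zero
      have heq : (fun τ : ℝ =>
          (v' t j2 - rowMin m (v' t) + 1) * (srState τ v' m t).2 j2 / τ
          - (v' t (pickTB (v' t) (oneRoundC v' m t)) - rowMin m (v' t) + 1)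
              * (srState τ v' m t).2 (pickTB (v' t) (oneRoundC v' m t)) / τ)
          = fun τ : ℝ =>
          ((v' t j2 - rowMin m (v' t) + 1) * (srState τ v' m t).2 j2
          - (v' t (pickTB (v' t) (oneRoundC v' m t)) - rowMin m (v' t) + 1)
              * (srState τ v' m t).2 (pickTB (v' t) (oneRoundC v' m t))) * τ⁻¹ := by
        funext τ; ring
      rw [heq]; exact hmain
    intro j1 hj1
    simp only [hsr]
    by_cases h : j1 = pickTB (v' t) (oneRoundC v' m t)
    · subst h
      rw [if_pos rfl]
      exact softmax_lim_one m _ hpm _ hgap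
    · rw [if_neg h]
      exact softmax_lim_zero m _ j1 hpm _ (hgap j1 hj1 h)
  -- main induction: c-limits at every time t ≤ m
  have key : ∀ t, t ≤ m → ∀ j1, j1 < m →
      Tendsto (fun τ => (srState τ v' m t).2 j1) (𝓝[>] (0:ℝ))
        (𝓝 (if j1 ∈ oneRoundC v' m t then 1 else 0)) := by
    intro t
    induction t with
    | zero =>
      intro _ j1 hj1
      have : (if j1 ∈ oneRoundC v' m 0 then (1:ℝ) else 0) = 1 := by
        rw [if_pos]
        exact Finset.mem_range.2 hj1
      rw [this]
      exact tendsto_const_nhds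
    | succ t ih =>
      intro ht j1 hj1
      have htm : t < m := ht
      have hy := step t htm (ih htm.le)
      have hcsucc : ∀ τ, (srState τ v' m (t+1)).2 j1
          = (1 - (srState τ v' m (t+1)).1 j1) * (srState τ v' m t).2 j1 := fun τ => rfl
      simp only [hcsucc]
      have hmul := ((tendsto_const_nhds :
          Tendsto (fun _ : ℝ => (1:ℝ)) (𝓝[>] (0:ℝ)) (𝓝 1)).sub (hy j1 hj1)).mul
        (ih htm.le j1 hj1)
      have hval : (if j1 ∈ oneRoundC v' m (t+1) then (1:ℝ) else 0)
          = (1 - if j1 = pickTB (v' t) (oneRoundC v' m t) then (1:ℝ) else 0)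
            * (if j1 ∈ oneRoundC v' m t then 1 else 0) := by
        by_cases h1 : j1 = pickTB (v' t) (oneRoundC v' m t) <;>
          by_cases h2 : j1 ∈ oneRoundC v' m t <;>
          simp [oneRoundC, Finset.mem_erase, h1, h2]
      rw [hval]
      exact hmul
  -- y-limits (rows of the soft one-round output)
  have keyY : ∀ t, t < m →
      Tendsto (fun τ => srOut τ v' m t j) (𝓝[>] (0:ℝ))
        (𝓝 (if j = pickTB (v' t) (oneRoundC v' m t) then 1 else 0)) := by
    intro t htm
    exact step t htm (key t htm.le) j hj
  -- exact procedure on the stacked matrix is round robin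
  have hrr : ∀ t, rrRem v n m t = oneRoundC v' m t := by
    intro t
    induction t with
    | zero => rfl
    | succ t ih =>
      rw [rrRem, oneRoundC, ih, hv't t]
  have hpick : ∀ t, rrPickAt v n m t = pickTB (v' t) (oneRoundC v' m t) := by
    intro t; rw [rrPickAt, hrr t, hv't t]
  -- distinctness of picks
  have hdist : ∀ t1 t2, t1 < t2 → t2 < m →
      pickTB (v' t1) (oneRoundC v' m t1) ≠ pickTB (v' t2) (oneRoundC v' m t2) := by
    intro t1 t2 h12 h2m heq
    have h2mem := (pickTB_spec (v' t2) _ (oneRoundC_nonempty v' h2m)).1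
    have hsub : oneRoundC v' m t2 ⊆ oneRoundC v' m (t1+1) := oneRoundC_mono v' m h12
    have hmem := hsub h2mem
    rw [oneRoundC] at hmem
    exact Finset.ne_of_mem_erase hmem heq.symm
  -- turn arithmetic
  have hkn : m / n * n = m := Nat.div_mul_cancel (Nat.dvd_of_mod_eq_zero hdiv)
  have hturn_lt : ∀ r, r < m / n → r * n + i < m := by
    intro r hr
    calc r * n + i < r * n + n := by omega
    _ = (r + 1) * n := by ring
    _ ≤ m / n * n := Nat.mul_le_mul_right n hr
    _ = m := hkn
  have hturn_mod : ∀ r, (r * n + i) % n = i := by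
    intro r
    rw [show r * n + i = n * r + i by ring, Nat.mul_add_mod, Nat.mod_eq_of_lt hi]
  -- the limit of the sum
  have hlim := tendsto_finset_sum (Finset.range (m / n))
    (f := fun r τ => srOut τ v' m (r * n + i) j)
    (a := fun r => if j = pickTB (v' (r * n + i)) (oneRoundC v' m (r * n + i)) then (1:ℝ) else 0)
    (fun r hr => keyY (r * n + i) (hturn_lt r (Finset.mem_range.1 hr)))
  have hval : (if j ∈ rrBundle v n m i then (1:ℝ) else 0)
      = ∑ r ∈ Finset.range (m / n),
          (if j = pickTB (v' (r * n + i)) (oneRoundC v' m (r * n + i)) then (1:ℝ) else 0) := by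
    by_cases hb : j ∈ rrBundle v n m i
    · rw [if_pos hb]
      symm
      rw [rrBundle] at hb
      obtain ⟨t, htmem, hpt⟩ := Finset.mem_image.1 hb
      rw [Finset.mem_filter, Finset.mem_range] at htmem
      obtain ⟨htm, hti⟩ := htmem
      have hjt : j = pickTB (v' t) (oneRoundC v' m t) := by
        rw [← hpick t]; exact hpt.symm
      have hr0k : t / n < m / n := by
        rw [Nat.div_lt_iff_lt_mul hn, hkn]; exact htm
      have ht_eq : t / n * n + i = t := by
        have h := Nat.div_add_mod t n
        rw [hti] at h
        rw [Nat.mul_comm] at h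
        exact h
      rw [Finset.sum_eq_single_of_mem (t / n) (Finset.mem_range.2 hr0k)]
      · rw [ht_eq, if_pos hjt]
      · intro r hr hrne
        rw [if_neg]
        intro heq
        have h1 : r * n + i < m := hturn_lt r (Finset.mem_range.1 hr)
        have hneq : r * n + i ≠ t := by
          intro hcontra
          apply hrne
          have : t / n = r := by
            rw [← hcontra, show r * n + i = i + n * r by ring,
              Nat.add_mul_div_left _ _ hn, Nat.div_eq_of_lt hi, Nat.zero_add]
          exact this.symm ▸ rfl
        rcases lt_or_gt_of_ne hneq with hlt | hgt
        · exact hdist _ _ hlt htm (heq.symm.trans hjt)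
        · exact hdist _ _ hgt h1 (hjt.symm.trans heq)
    · rw [if_neg hb]
      symm
      refine Finset.sum_eq_zero fun r hr => ?_
      rw [if_neg]
      intro heq
      apply hb
      rw [rrBundle]
      refine Finset.mem_image.2 ⟨r * n + i,
        Finset.mem_filter.2 ⟨Finset.mem_range.2 (hturn_lt r (Finset.mem_range.1 hr)),
          hturn_mod r⟩, ?_⟩
      rw [hpick]
      exact heq.symm
  rw [hval]
  exact hlim
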